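/- Let m > 1, σ > 0, let ν be the Gaussian measure on ℝ with mean m and variance σ², and let S = [1, 2m−1]. Then the conditional second moment of the reciprocal admits the convergent series representation ∫_S (1/x²) dν(x) = ∑_{j=0}^{∞} (2j+1) · m^{−(2j+2)} ∫_S (x−m)^{2j} dν(x), where the series on the right converges. -/

import Mathlib

open MeasureTheory ProbabilityTheory Real Set

/-- Series representation for the conditional second moment of the reciprocal of a Gaussian
restricted to `S = [1, 2m−1]`, together with summability of the series. -/
theorem reciprocal_gaussian_second_moment_series (m σ : ℝ) (hm : 1 < m) (hσ : 0 < σ) :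
    Summable (fun j : ℕ =>
        (2 * (j : ℝ) + 1) * (1 / m ^ (2 * j + 2)) *
          ∫ x in Icc 1 (2 * m - 1), (x - m) ^ (2 * j)
            ∂(gaussianReal m ⟨σ ^ 2, sq_nonneg σ⟩)) ∧
    (∫ x in Icc 1 (2 * m - 1), (1 / x ^ 2) ∂(gaussianReal m ⟨σ ^ 2, sq_nonneg σ⟩)) =
      ∑' j : ℕ,
        (2 * (j : ℝ) + 1) * (1 / m ^ (2 * j + 2)) *
          ∫ x in Icc 1 (2 * m - 1), (x - m) ^ (2 * j)
            ∂(gaussianReal m ⟨σ ^ 2, sq_nonneg σ⟩) := by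
  have hm0 : (0 : ℝ) < m := by linarith
  have hmne : m ≠ 0 := ne_of_gt hm0
  set v : NNReal := ⟨σ ^ 2, sq_nonneg σ⟩ with hv
  set ν : Measure ℝ := gaussianReal m v with hν
  set S : Set ℝ := Icc 1 (2 * m - 1) with hS
  have hSmeas : MeasurableSet S := measurableSet_Icc
  -- the summands
  set f : ℕ → ℝ → ℝ := fun k x => ((k : ℝ) + 1) * (m - x) ^ k / m ^ (k + 2) with hf
  -- bound on S
  have habs : ∀ x ∈ S, |m - x| ≤ m - 1 := by
    intro x hx
    rw [hS, mem_Icc] at hx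
    rw [abs_le]
    constructor <;> linarith [hx.1, hx.2]
  -- pointwise sum on S
  have hptwise : ∀ x ∈ S, HasSum (fun k => f k x) (1 / x ^ 2) := by
    intro x hx
    have hx1 : (1 : ℝ) ≤ x := hx.1
    have hxne : x ≠ 0 := by linarith
    set t : ℝ := (m - x) / m with ht
    have htlt : ‖t‖ < 1 := by
      rw [Real.norm_eq_abs, ht, abs_div, abs_of_pos hm0, div_lt_one hm0]
      calc |m - x| ≤ m - 1 := habs x hx
        _ < m := by linarith
    have h1 : HasSum (fun n : ℕ => (n : ℝ) * t ^ n) (t / (1 - t) ^ 2) :=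
      hasSum_coe_mul_geometric_of_norm_lt_one htlt
    have h2 : HasSum (fun n : ℕ => t ^ n) (1 - t)⁻¹ :=
      hasSum_geometric_of_norm_lt_one htlt
    have h3 : HasSum (fun n : ℕ => ((n : ℝ) + 1) * t ^ n)
        (t / (1 - t) ^ 2 + (1 - t)⁻¹) := by
      have := h1.add h2
      convert this using 2 with n
      ring
    have h1t : 1 - t = x / m := by
      rw [ht]; field_simp; ring
    have h1tne : (1 : ℝ) - t ≠ 0 := by
      rw [h1t]
      exact div_ne_zero hxne hmne
    have hsumval : t / (1 - t) ^ 2 + (1 - t)⁻¹ = 1 / (1 - t) ^ 2 := by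
      field_simp
      ring
    rw [hsumval] at h3
    have h4 := h3.mul_right (1 / m ^ 2)
    have hfun : (fun k => f k x) = fun k : ℕ => ((k : ℝ) + 1) * t ^ k * (1 / m ^ 2) := by
      ext k
      simp only [hf, ht, div_pow, pow_add]
      field_simp
    have hval : 1 / (1 - t) ^ 2 * (1 / m ^ 2) = 1 / x ^ 2 := by
      rw [h1t, div_pow]
      field_simp
    rw [hfun, ← hval]
    exact h4
  -- integrability of each f k on S
  have hint : ∀ k, IntegrableOn (f k) S ν := by
    intro k
    apply ContinuousOn.integrableOn_compact isCompact_Icc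
    apply Continuous.continuousOn
    rw [hf]
    exact (continuous_const.mul ((continuous_const.sub continuous_id).pow k)).div_const _
  -- norm bound for integrals
  have hbound : ∀ k, (∫ x in S, ‖f k x‖ ∂ν) ≤ f k 1 := by
    intro k
    have hf1 : f k 1 = ((k : ℝ) + 1) * (m - 1) ^ k / m ^ (k + 2) := rfl
    calc (∫ x in S, ‖f k x‖ ∂ν) ≤ ∫ x in S, f k 1 ∂ν := by
          apply setIntegral_mono_on (hint k).norm (integrableOn_const ?_) hSmeas
          · intro x hx
            rw [hf1, Real.norm_eq_abs, hf, abs_div, abs_of_pos (pow_pos hm0 _), abs_mul,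
              abs_of_nonneg (by positivity : (0:ℝ) ≤ (k:ℝ)+1), abs_pow]
            gcongr
            · exact habs x hx
          · exact measure_ne_top ν S
      _ = f k 1 * (ν S).toReal := by rw [setIntegral_const, smul_eq_mul, mul_comm]; rfl
      _ ≤ f k 1 * 1 := by
          apply mul_le_mul_of_nonneg_left ?_ ?_
          · exact ENNReal.toReal_le_of_le_ofReal zero_le_one (by simpa using prob_le_one)
          · rw [hf1]
            apply div_nonneg (mul_nonneg (by positivity) (pow_nonneg (by linarith) k))
              (by positivity)
      _ = f k 1 := mul_one _
  have hfk1_sum : Summable (fun k => f k 1) := by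
    have h1S : (1 : ℝ) ∈ S := by
      rw [hS, mem_Icc]; constructor <;> linarith
    exact (hptwise 1 h1S).summable
  have hnormsum : Summable (fun k => ∫ x in S, ‖f k x‖ ∂ν) := by
    apply Summable.of_nonneg_of_le (fun k => integral_nonneg (fun x => norm_nonneg _))
      hbound hfk1_sum
  -- swap integral and sum
  have hswap : (∑' k, ∫ x in S, f k x ∂ν) = ∫ x in S, (1 / x ^ 2) ∂ν := by
    rw [integral_tsum_of_summable_integral_norm hint hnormsum]
    apply setIntegral_congr_fun hSmeas
    intro x hx
    exact (hptwise x hx).tsum_eq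
  set g : ℕ → ℝ := fun k => ∫ x in S, f k x ∂ν with hg
  have hgsummable : Summable g := by
    apply Summable.of_norm_bounded hnormsum
    intro k
    exact norm_integral_le_integral_norm _
  -- symmetry: odd moments vanish
  have hmap : Measure.map (fun x : ℝ => 2 * m - x) ν = ν := by
    have hcomp : (fun x : ℝ => 2 * m - x) = (fun y : ℝ => y + 2 * m) ∘ (fun x : ℝ => -1 * x) := by
      ext x; simp; ring
    have h1 : Measure.map (fun x : ℝ => -1 * x) ν = gaussianReal (-m) v := by
      rw [hν, gaussianReal_map_const_mul (-1 : ℝ)]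
      congr 1
      · ring
      · rw [← NNReal.coe_inj, NNReal.coe_mul]
        norm_num
    rw [hcomp, ← Measure.map_map (measurable_id'.add_const _) (measurable_id'.const_mul _), h1,
      gaussianReal_map_add_const, hν]
    congr 1
    ring
  have hodd : ∀ j : ℕ, (∫ x in S, (m - x) ^ (2 * j + 1) ∂ν) = 0 := by
    intro j
    have hpre : (fun x : ℝ => 2 * m - x) ⁻¹' S = S := by
      ext x
      simp only [hS, mem_preimage, mem_Icc]
      constructor <;> intro h <;> constructor <;> linarith [h.1, h.2]
    have hmeasT : AEMeasurable (fun x : ℝ => 2 * m - x) ν :=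
      (measurable_const.sub measurable_id).aemeasurable
    have hneg : ∀ x : ℝ, (m - (2 * m - x)) ^ (2 * j + 1) = -((m - x) ^ (2 * j + 1)) := by
      intro x
      have hx : m - (2 * m - x) = -(m - x) := by ring
      rw [hx, Odd.neg_pow ⟨j, by ring⟩]
    have key : (∫ x in S, (m - x) ^ (2 * j + 1) ∂ν)
        = -∫ x in S, (m - x) ^ (2 * j + 1) ∂ν := by
      conv_lhs => rw [← hmap]
      rw [setIntegral_map (f := fun x => (m - x) ^ (2 * j + 1)) hSmeas
        (((continuous_const.sub continuous_id').pow _).aestronglyMeasurable) hmeasT, hpre,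
        ← integral_neg]
      apply integral_congr_ae
      filter_upwards with x
      exact hneg x
    linarith [key]
  -- g(2j+1) = 0
  have hgodd : ∀ j : ℕ, g (2 * j + 1) = 0 := by
    intro j
    have hgo : g (2 * j + 1)
        = ∫ x in S, (((2 * j + 1 : ℕ) : ℝ) + 1) / m ^ (2 * j + 1 + 2)
            * (m - x) ^ (2 * j + 1) ∂ν := by
      rw [hg]
      apply integral_congr_ae
      filter_upwards with x
      simp only [hf]
      ring
    rw [hgo, integral_const_mul, hodd j, mul_zero]
  -- g(2j) equals the target term
  have hgeven : ∀ j : ℕ, g (2 * j)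
      = (2 * (j : ℝ) + 1) * (1 / m ^ (2 * j + 2)) * ∫ x in S, (x - m) ^ (2 * j) ∂ν := by
    intro j
    have h1 : g (2 * j)
        = ∫ x in S, ((2 * (j : ℝ) + 1) * (1 / m ^ (2 * j + 2))) * (x - m) ^ (2 * j) ∂ν := by
      rw [hg]
      apply integral_congr_ae
      filter_upwards with x
      simp only [hf]
      rw [show m - x = -(x - m) by ring, Even.neg_pow ⟨j, by ring⟩]
      push_cast
      ring
    rw [h1, integral_const_mul]
  -- summability of even subsequence
  have hgesum : Summable (fun j : ℕ => g (2 * j)) :=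
    hgsummable.comp_injective (fun a b h => by omega)
  have hgosum : Summable (fun j : ℕ => g (2 * j + 1)) := by
    apply summable_of_ne_finset_zero (s := ∅)
    intro j _
    exact hgodd j
  constructor
  · exact hgesum.congr hgeven
  · rw [← hswap, ← tsum_even_add_odd hgesum hgosum]
    have hzero : (∑' j : ℕ, g (2 * j + 1)) = 0 := by
      rw [tsum_congr hgodd, tsum_zero]
    rw [hzero, add_zero]
    exact tsum_congr hgeven
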